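/- For a compact Hausdorff space X, X is I-favorable if and only if its superextension λX is I-favorable. -/

import Mathlib

/-- A topological space `X` is I-favorable if there is a strategy `σ` assigning to each
finite (possibly empty) sequence of open subsets of `X` an open subset of `X` such that
whenever `B₀, B₁, …` are nonempty open sets with `B₀ ⊆ σ ∅` and `B_{k+1} ⊆ σ (B₀,…,B_k)`,
the union `⋃ k, B k` is dense in `X`. (For the empty space the nonemptiness requirement
on the values of `σ` is vacuous.) -/
def IFavorable (X : Type*) [TopologicalSpace X] : Prop :=
  ∃ σ : List (Set X) → Set X,
    (∀ l, IsOpen (σ l)) ∧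
    (∀ l, Nonempty X → (σ l).Nonempty) ∧
    ∀ B : ℕ → Set X, (∀ k, IsOpen (B k)) → (∀ k, (B k).Nonempty) →
      B 0 ⊆ σ [] →
      (∀ k, B (k + 1) ⊆ σ (List.ofFn fun i : Fin (k + 1) => B i)) →
      Dense (⋃ k, B k)

universe u

/-- A maximal linked system on `X`: a family of nonempty closed subsets of `X`, any two
members of which intersect, which is maximal among such families (any nonempty closed set
meeting every member already belongs to the family). -/
structure MaxLinked (X : Type u) [TopologicalSpace X] where
  sets : Set (Set X)
  isClosed' : ∀ F ∈ sets, IsClosed F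
  nonempty' : ∀ F ∈ sets, F.Nonempty
  linked' : ∀ F ∈ sets, ∀ G ∈ sets, (F ∩ G).Nonempty
  maximal' : ∀ F : Set X, IsClosed F → F.Nonempty →
    (∀ G ∈ sets, (F ∩ G).Nonempty) → F ∈ sets

/-- For `H ⊆ X`, the set `H⁺ = {ξ ∈ λX : F ⊆ H for some F ∈ ξ}`. -/
def MaxLinked.plus {X : Type u} [TopologicalSpace X] (H : Set X) : Set (MaxLinked X) :=
  {ξ | ∃ F ∈ ξ.sets, F ⊆ H}

/-- The superextension topology on `λX`: generated by the sets `U⁺` with `U` open in `X`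
(finite intersections `[U₁⁺, …, U_k⁺]` of such sets form a base). -/
instance MaxLinked.instTopologicalSpace (X : Type u) [TopologicalSpace X] :
    TopologicalSpace (MaxLinked X) :=
  TopologicalSpace.generateFrom {S | ∃ U : Set X, IsOpen U ∧ S = MaxLinked.plus U}

namespace IFavAux

open Set TopologicalSpace
open scoped Classical

variable {X : Type u} [TopologicalSpace X]

/-- Finite intersections of pluses. -/
def IP (L : List (Set X)) : Set (MaxLinked X) := {ξ | ∀ U ∈ L, ξ ∈ MaxLinked.plus U}

theorem isOpen_plus {U : Set X} (hU : IsOpen U) : IsOpen (MaxLinked.plus U) :=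
  TopologicalSpace.GenerateOpen.basic _ ⟨U, hU, rfl⟩

theorem IP_nil : IP ([] : List (Set X)) = univ := by ext ξ; simp [IP]

theorem IP_cons (U : Set X) (L : List (Set X)) :
    IP (U :: L) = MaxLinked.plus U ∩ IP L := by ext ξ; simp [IP]

theorem isOpen_IP {L : List (Set X)} (h : ∀ U ∈ L, IsOpen U) : IsOpen (IP L) := by
  induction L with
  | nil => rw [IP_nil]; exact isOpen_univ
  | cons a l ih =>
    rw [IP_cons]
    exact (isOpen_plus (h a (by simp))).inter (ih fun U hU => h U (by simp [hU]))

theorem IP_subset_plus {L : List (Set X)} {U : Set X} (h : U ∈ L) :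
    IP L ⊆ MaxLinked.plus U := fun ξ hξ => hξ U h

theorem IP_cons_subset {U : Set X} {L : List (Set X)} : IP (U :: L) ⊆ IP L :=
  fun ξ hξ V hV => hξ V (by simp [hV])

theorem univ_mem_sets (hX : Nonempty X) (ξ : MaxLinked X) : (univ : Set X) ∈ ξ.sets :=
  ξ.maximal' univ isClosed_univ univ_nonempty
    (fun G hG => by simpa using ξ.nonempty' G hG)

theorem mem_plus_univ (hX : Nonempty X) (ξ : MaxLinked X) :
    ξ ∈ MaxLinked.plus (univ : Set X) := ⟨univ, univ_mem_sets hX ξ, subset_rfl⟩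

/-- Zorn: extend a linked family of closed sets to a maximal linked system. -/
theorem exists_maxLinked {L : Set (Set X)} (hcl : ∀ F ∈ L, IsClosed F)
    (hlink : ∀ F ∈ L, ∀ G ∈ L, (F ∩ G).Nonempty) :
    ∃ ξ : MaxLinked X, L ⊆ ξ.sets := by
  set S : Set (Set (Set X)) :=
    {M | (∀ F ∈ M, IsClosed F) ∧ (∀ F ∈ M, ∀ G ∈ M, (F ∩ G).Nonempty)} with hS
  have hchain : ∀ c ⊆ S, IsChain (· ⊆ ·) c → c.Nonempty → ∃ ub ∈ S, ∀ s ∈ c, s ⊆ ub := by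
    intro c hc hch ⟨M0, hM0⟩
    refine ⟨⋃₀ c, ⟨?_, ?_⟩, fun s hs => subset_sUnion_of_mem hs⟩
    · rintro F ⟨M, hM, hFM⟩
      exact (hc hM).1 F hFM
    · rintro F ⟨M, hM, hFM⟩ G ⟨N, hN, hGN⟩
      rcases hch.total hM hN with h | h
      · exact (hc hN).2 F (h hFM) G hGN
      · exact (hc hM).2 F hFM G (h hGN)
  obtain ⟨m, hLm, hmax⟩ := zorn_subset_nonempty S hchain L ⟨hcl, hlink⟩
  refine ⟨⟨m, hmax.1.1, ?_, hmax.1.2, ?_⟩, hLm⟩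
  · intro F hF
    have := hmax.1.2 F hF F hF
    simpa using this
  · intro F hFc hFn hFl
    have hins : insert F m ∈ S := by
      constructor
      · rintro G (rfl | hG)
        · exact hFc
        · exact hmax.1.1 G hG
      · rintro G (rfl | hG) H (rfl | hH)
        · simpa using hFn
        · exact hFl H hH
        · rw [inter_comm]; exact hFl G hG
        · exact hmax.1.2 G hG H hH
    have : insert F m ⊆ m := hmax.2 hins (subset_insert F m)
    exact this (mem_insert F m)

/-- The maximal linked system of all closed sets containing a point. -/
noncomputable def pointMLS [T1Space X] (x : X) : MaxLinked X where
  sets := {F | IsClosed F ∧ x ∈ F}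
  isClosed' := fun F hF => hF.1
  nonempty' := fun F hF => ⟨x, hF.2⟩
  linked' := fun F hF G hG => ⟨x, hF.2, hG.2⟩
  maximal' := by
    intro F hFc hFn hFl
    have := hFl {x} ⟨isClosed_singleton, rfl⟩
    rcases this with ⟨y, hyF, hy⟩
    simp only [mem_singleton_iff] at hy
    exact ⟨hFc, hy ▸ hyF⟩

theorem pointMLS_mem_plus [T1Space X] {x : X} {U : Set X} (hx : x ∈ U) :
    pointMLS x ∈ MaxLinked.plus U :=
  ⟨{x}, ⟨isClosed_singleton, rfl⟩, by simpa using hx⟩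

/-- a singleton-or-empty选 selection -/
noncomputable def pt (S : Set X) : Set X :=
  if h : S.Nonempty then {h.choose} else ∅

theorem pt_subset (S : Set X) : pt S ⊆ S := by
  unfold pt
  split
  · next h => simpa using h.choose_spec
  · simp

theorem pt_nonempty {S : Set X} (h : S.Nonempty) : (pt S).Nonempty := by
  unfold pt; rw [dif_pos h]; simp

theorem pt_finite (S : Set X) : (pt S).Finite := by
  unfold pt; split <;> simp

/-- From a finite pairwise-linked family of (nonempty) open sets, get a maximal linked
system in all the pluses. -/
theorem exists_mem_IP [T1Space X] {L : List (Set X)}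
    (hlink : ∀ A ∈ L, ∀ B ∈ L, (A ∩ B).Nonempty) :
    ∃ ξ : MaxLinked X, ξ ∈ IP L := by
  classical
  set F : Set X → Set X := fun A => ⋃ B ∈ {B | B ∈ L}, (pt (A ∩ B) ∪ pt (B ∩ A)) with hF
  have hFfin : ∀ A, (F A).Finite := by
    intro A
    exact Set.Finite.biUnion (List.finite_toSet L) fun B _ => (pt_finite _).union (pt_finite _)
  have hFsub : ∀ A, F A ⊆ A := by
    intro A x hx
    simp only [hF, mem_iUnion] at hx
    obtain ⟨B, hB, hx⟩ := hx
    rcases hx with hx | hx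
    · exact inter_subset_left (pt_subset _ hx)
    · exact inter_subset_right (pt_subset _ hx)
  have hFl : ∀ A ∈ L, ∀ B ∈ L, (F A ∩ F B).Nonempty := by
    intro A hA B hB
    obtain ⟨x, hx⟩ := pt_nonempty (hlink A hA B hB)
    refine ⟨x, ?_, ?_⟩
    · simp only [hF, mem_iUnion]
      exact ⟨B, hB, Or.inl hx⟩
    · simp only [hF, mem_iUnion]
      exact ⟨A, hA, Or.inr hx⟩
  obtain ⟨ξ, hξ⟩ := exists_maxLinked (L := F '' {A | A ∈ L})
    (by rintro G ⟨A, hA, rfl⟩; exact (hFfin A).isClosed)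
    (by rintro G ⟨A, hA, rfl⟩ H ⟨B, hB, rfl⟩; exact hFl A hA B hB)
  refine ⟨ξ, fun A hA => ⟨F A, hξ ⟨A, hA, rfl⟩, hFsub A⟩⟩

theorem linked_of_mem_IP {L : List (Set X)} {ξ : MaxLinked X} (hξ : ξ ∈ IP L) :
    ∀ A ∈ L, ∀ B ∈ L, (A ∩ B).Nonempty := by
  intro A hA B hB
  obtain ⟨FA, hFA, hFAs⟩ := hξ A hA
  obtain ⟨FB, hFB, hFBs⟩ := hξ B hB
  obtain ⟨x, hx1, hx2⟩ := ξ.linked' FA hFA FB hFB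
  exact ⟨x, hFAs hx1, hFBs hx2⟩

theorem nonempty_of_mem_IP {L : List (Set X)} {ξ : MaxLinked X} (hξ : ξ ∈ IP L) :
    ∀ A ∈ L, A.Nonempty := fun A hA => by
  have := linked_of_mem_IP hξ A hA A hA
  simpa using this

/-- The refinement ("hard") lemma: if `IP W ⊆ V⁺` then some member of `W` is inside `V`. -/
theorem exists_subset_of_IP_subset_plus [T1Space X] {W : List (Set X)} (hne : W ≠ [])
    (hlink : ∀ A ∈ W, ∀ B ∈ W, (A ∩ B).Nonempty) {V : Set X} (hV : IsOpen V)
    (h : IP W ⊆ MaxLinked.plus V) : ∃ A ∈ W, A ⊆ V := by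
  classical
  by_contra hc
  push_neg at hc
  -- each A ∈ W meets Vᶜ
  have hAV : ∀ A ∈ W, (A \ V).Nonempty := by
    intro A hA
    rcases Set.not_subset.mp (hc A hA) with ⟨x, hx1, hx2⟩
    exact ⟨x, hx1, hx2⟩
  set F : Set X → Set X := fun A =>
    (⋃ B ∈ {B | B ∈ W}, (pt (A ∩ B) ∪ pt (B ∩ A))) ∪ pt (A \ V) with hF
  have hFfin : ∀ A, (F A).Finite := fun A =>
    ((Set.Finite.biUnion (List.finite_toSet W) fun B _ => (pt_finite _).union (pt_finite _))).union
      (pt_finite _)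
  have hFsub : ∀ A, F A ⊆ A := by
    intro A x hx
    rcases hx with hx | hx
    · simp only [mem_iUnion] at hx
      obtain ⟨B, hB, hx⟩ := hx
      rcases hx with hx | hx
      · exact inter_subset_left (pt_subset _ hx)
      · exact inter_subset_right (pt_subset _ hx)
    · exact (pt_subset _ hx).1
  have hFl : ∀ A ∈ W, ∀ B ∈ W, (F A ∩ F B).Nonempty := by
    intro A hA B hB
    obtain ⟨x, hx⟩ := pt_nonempty (hlink A hA B hB)
    refine ⟨x, Or.inl ?_, Or.inl ?_⟩
    · simp only [mem_iUnion]; exact ⟨B, hB, Or.inl hx⟩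
    · simp only [mem_iUnion]; exact ⟨A, hA, Or.inr hx⟩
  have hFVc : ∀ A ∈ W, (F A ∩ Vᶜ).Nonempty := by
    intro A hA
    obtain ⟨x, hx⟩ := pt_nonempty (hAV A hA)
    exact ⟨x, Or.inr hx, (pt_subset _ hx).2⟩
  obtain ⟨A0, hA0⟩ := List.exists_mem_of_ne_nil W hne
  have hVcne : (Vᶜ : Set X).Nonempty := by
    obtain ⟨x, hx⟩ := hAV A0 hA0
    exact ⟨x, hx.2⟩
  obtain ⟨ξ, hξ⟩ := exists_maxLinked (L := insert Vᶜ (F '' {A | A ∈ W}))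
    (by
      rintro G (rfl | ⟨A, hA, rfl⟩)
      · exact hV.isClosed_compl
      · exact (hFfin A).isClosed)
    (by
      rintro G (rfl | ⟨A, hA, rfl⟩) H (rfl | ⟨B, hB, rfl⟩)
      · simpa using hVcne
      · rw [inter_comm]; exact hFVc B hB
      · exact hFVc A hA
      · exact hFl A hA B hB)
  have hξIP : ξ ∈ IP W := fun A hA => ⟨F A, hξ (Or.inr ⟨A, hA, rfl⟩), hFsub A⟩
  obtain ⟨G, hG, hGV⟩ := h hξIP
  obtain ⟨x, hx1, hx2⟩ := ξ.linked' G hG Vᶜ (hξ (Or.inl rfl))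
  exact hx2 (hGV hx1)

/-- Extraction: basic sets `IP L` form a basis. -/
theorem exists_IP_subset {S : Set (MaxLinked X)} (hS : IsOpen S) {ξ : MaxLinked X}
    (hξ : ξ ∈ S) :
    ∃ L : List (Set X), (∀ U ∈ L, IsOpen U) ∧ ξ ∈ IP L ∧ IP L ⊆ S := by
  have hb := TopologicalSpace.isTopologicalBasis_of_subbasis
    (rfl : MaxLinked.instTopologicalSpace X = _)
  obtain ⟨b, hb1, hξb, hbS⟩ := hb.exists_subset_of_mem_open hξ hS
  obtain ⟨f, ⟨hfin, hsub⟩, rfl⟩ := hb1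
  -- turn finite f into a list
  set g : Set (MaxLinked X) → Set X := fun s =>
    if h : ∃ U : Set X, IsOpen U ∧ s = MaxLinked.plus U then h.choose else ∅ with hg
  have hgspec : ∀ s ∈ f, IsOpen (g s) ∧ s = MaxLinked.plus (g s) := by
    intro s hs
    have h : ∃ U : Set X, IsOpen U ∧ s = MaxLinked.plus U := hsub hs
    simp only [hg]
    rw [dif_pos h]
    exact h.choose_spec
  obtain ⟨L, hL1, hL2⟩ : ∃ L : List (Set X), (∀ U ∈ L, IsOpen U) ∧ ⋂₀ f = IP L := by
    refine ⟨hfin.toFinset.toList.map g, ?_, ?_⟩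
    · intro U hU
      simp only [List.mem_map, Finset.mem_toList, Set.Finite.mem_toFinset] at hU
      obtain ⟨s, hs, rfl⟩ := hU
      exact (hgspec s hs).1
    · ext η
      simp only [Set.mem_sInter, IP, Set.mem_setOf_eq, List.mem_map, Finset.mem_toList,
        Set.Finite.mem_toFinset]
      constructor
      · rintro h U ⟨s, hs, rfl⟩
        have := h s hs
        rwa [(hgspec s hs).2] at this
      · intro h s hs
        rw [(hgspec s hs).2]
        exact h (g s) ⟨s, hs, rfl⟩
  exact ⟨L, hL1, hL2 ▸ hξb, hL2 ▸ hbS⟩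

/-- A canonical choice of a basic refinement (always starting with `univ`). -/
noncomputable def extract (S : Set (MaxLinked X)) : List (Set X) :=
  if h : IsOpen S ∧ S.Nonempty then
    Set.univ :: (exists_IP_subset h.1 h.2.choose_spec).choose
  else [Set.univ]

theorem extract_ne_nil (S : Set (MaxLinked X)) : extract S ≠ [] := by
  unfold extract; split <;> simp

theorem extract_eq_cons (S : Set (MaxLinked X)) :
    ∃ t, extract S = (Set.univ : Set X) :: t := by
  unfold extract; split
  · exact ⟨_, rfl⟩
  · exact ⟨[], rfl⟩

theorem extract_spec (hX : Nonempty X) {S : Set (MaxLinked X)} (hS : IsOpen S)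
    (hSn : S.Nonempty) :
    (∀ U ∈ extract S, IsOpen U) ∧ (∃ ξ, ξ ∈ IP (extract S)) ∧ IP (extract S) ⊆ S := by
  unfold extract
  rw [dif_pos ⟨hS, hSn⟩]
  obtain ⟨h1, h2, h3⟩ := (exists_IP_subset hS hSn.choose_spec).choose_spec
  refine ⟨?_, ⟨hSn.choose, ?_⟩, ?_⟩
  · intro U hU
    rcases List.mem_cons.mp hU with rfl | hU
    · exact isOpen_univ
    · exact h1 U hU
  · intro U hU
    rcases List.mem_cons.mp hU with rfl | hU
    · exact mem_plus_univ hX _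
    · exact h2 U hU
  · intro η hη
    exact h3 (fun U hU => hη U (by simp [hU]))

end IFavAux
section PartB
namespace IFavAux
open Set
variable {X : Type u} [TopologicalSpace X]

/-- finite unions -/
def unionList (l : List (Set X)) : Set X := l.foldr (· ∪ ·) ∅

theorem subset_unionList {l : List (Set X)} {A : Set X} (h : A ∈ l) : A ⊆ unionList l := by
  induction l with
  | nil => simp at h
  | cons a t ih =>
    rcases List.mem_cons.mp h with rfl | h
    · exact subset_union_left
    · exact (ih h).trans subset_union_right

theorem unionList_mem {P : Set (Set X)} (hPe : ∅ ∈ P)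
    (hPu : ∀ A ∈ P, ∀ B ∈ P, A ∪ B ∈ P) {l : List (Set X)} (h : ∀ A ∈ l, A ∈ P) :
    unionList l ∈ P := by
  induction l with
  | nil => exact hPe
  | cons a t ih =>
    exact hPu a (h a (by simp)) (unionList t)
      (ih fun A hA => h A (by simp [hA]))

/-- `V` is a witness for `U` relative to `P`. -/
def WitFor (P : Set (Set X)) (V U : Set X) : Prop :=
  ∀ W ∈ P, W.Nonempty → W ⊆ V → (W ∩ U).Nonempty

theorem witFor_mono {P : Set (Set X)} {V U U' : Set X} (h : WitFor P V U) (hUU : U ⊆ U') :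
    WitFor P V U' := fun W hW hWn hWV =>
  (h W hW hWn hWV).mono (inter_subset_inter_right _ hUU)

theorem witFor_unionList {P : Set (Set X)} (hPi : ∀ A ∈ P, ∀ B ∈ P, A ∩ B ∈ P)
    {U : Set X} {l : List (Set X)} (hl : ∀ A ∈ l, A ∈ P ∧ WitFor P A U) :
    WitFor P (unionList l) U := by
  induction l with
  | nil =>
    intro W hW hWn hWs
    obtain ⟨x, hx⟩ := hWn
    exact absurd (hWs hx) (by simp [unionList])
  | cons a t ih =>
    intro W hW hWn hWs
    by_cases hWa : (W ∩ a).Nonempty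
    · have hWaP : W ∩ a ∈ P := hPi W hW a (hl a (by simp)).1
      have := (hl a (by simp)).2 (W ∩ a) hWaP hWa inter_subset_right
      exact this.mono (inter_subset_inter_left _ inter_subset_left)
    · have hWt : W ⊆ unionList t := by
        intro x hx
        rcases hWs hx with hxa | hxt
        · exact absurd ⟨x, hx, hxa⟩ hWa
        · exact hxt
      exact ih (fun A hA => hl A (by simp [hA])) W hW hWn hWt

/-- The key consequence of a winning strategy: a σ-closed family `P` is "skeletal":
every nonempty open set has a witness in `P`. -/
theorem skeletal_witness (hX : Nonempty X) {σ : List (Set X) → Set X}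
    (hσo : ∀ l, IsOpen (σ l)) (hσn : ∀ l, Nonempty X → (σ l).Nonempty)
    (hσw : ∀ B : ℕ → Set X, (∀ k, IsOpen (B k)) → (∀ k, (B k).Nonempty) →
      B 0 ⊆ σ [] → (∀ k, B (k + 1) ⊆ σ (List.ofFn fun i : Fin (k + 1) => B i)) →
      Dense (⋃ k, B k))
    {P : Set (Set X)} (hPo : ∀ A ∈ P, IsOpen A)
    (hPσ : ∀ l : List (Set X), (∀ A ∈ l, A ∈ P) → σ l ∈ P)
    {U : Set X} (hUo : IsOpen U) (hUn : U.Nonempty) :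
    ∃ V, V ∈ P ∧ V.Nonempty ∧ WitFor P V U := by
  by_contra hcon
  have hcon' : ∀ V, V ∈ P → V.Nonempty →
      ∃ W, W ∈ P ∧ W.Nonempty ∧ W ⊆ V ∧ W ∩ U = ∅ := by
    intro V hVP hVn
    by_contra hw
    push_neg at hw
    exact hcon ⟨V, hVP, hVn, hw⟩
  classical
  set g : Set X → Set X := fun V =>
    if h : ∃ W, W ∈ P ∧ W.Nonempty ∧ W ⊆ V ∧ W ∩ U = ∅ then h.choose else ∅ with hg
  have hgspec : ∀ V, V ∈ P → V.Nonempty →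
      g V ∈ P ∧ (g V).Nonempty ∧ g V ⊆ V ∧ g V ∩ U = ∅ := by
    intro V hVP hVn
    have h := hcon' V hVP hVn
    simp only [hg]
    rw [dif_pos h]
    exact h.choose_spec
  obtain ⟨Ls, hLs0, hLsS⟩ : ∃ Ls : ℕ → List (Set X), Ls 0 = [] ∧
      ∀ n, Ls (n + 1) = Ls n ++ [g (σ (Ls n))] :=
    ⟨fun n => Nat.rec [] (fun _ l => l ++ [g (σ l)]) n, rfl, fun _ => rfl⟩
  set B : ℕ → Set X := fun k => g (σ (Ls k)) with hB
  have hmem : ∀ k, ∀ A ∈ Ls k, A ∈ P := by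
    intro k
    induction k with
    | zero => rw [hLs0]; simp
    | succ n ih =>
      rw [hLsS n]
      intro A hA
      rcases List.mem_append.mp hA with hA | hA
      · exact ih A hA
      · rcases List.mem_singleton.mp hA with rfl
        exact (hgspec _ (hPσ _ ih) (hσn _ hX)).1
  have hBspec : ∀ k, B k ∈ P ∧ (B k).Nonempty ∧ B k ⊆ σ (Ls k) ∧ B k ∩ U = ∅ :=
    fun k => hgspec _ (hPσ _ (hmem k)) (hσn _ hX)
  have hofFn : ∀ k, Ls k = List.ofFn (fun i : Fin k => B i) := by
    intro k
    induction k with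
    | zero => rw [hLs0]; simp
    | succ n ih =>
      rw [hLsS n, List.ofFn_succ' (fun i : Fin (n + 1) => B i)]
      simp only [List.concat_eq_append, Fin.coe_castSucc, Fin.val_last]
      rw [← ih]
  have hdense := hσw B (fun k => hPo _ (hBspec k).1) (fun k => (hBspec k).2.1)
    (by rw [← hLs0]; exact (hBspec 0).2.2.1)
    (by intro k; rw [← hofFn]; exact (hBspec (k + 1)).2.2.1)
  obtain ⟨x, hxU, hxB⟩ := hdense.inter_open_nonempty U hUo hUn
  obtain ⟨k, hk⟩ := Set.mem_iUnion.mp hxB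
  have : x ∈ B k ∩ U := ⟨hk, hxU⟩
  rw [(hBspec k).2.2.2] at this
  exact this

/-- Linked witnesses for a linked family. -/
theorem linked_witness (hX : Nonempty X) {σ : List (Set X) → Set X}
    (hσo : ∀ l, IsOpen (σ l)) (hσn : ∀ l, Nonempty X → (σ l).Nonempty)
    (hσw : ∀ B : ℕ → Set X, (∀ k, IsOpen (B k)) → (∀ k, (B k).Nonempty) →
      B 0 ⊆ σ [] → (∀ k, B (k + 1) ⊆ σ (List.ofFn fun i : Fin (k + 1) => B i)) →
      Dense (⋃ k, B k))
    {P : Set (Set X)} (hPo : ∀ A ∈ P, IsOpen A)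
    (hPσ : ∀ l : List (Set X), (∀ A ∈ l, A ∈ P) → σ l ∈ P)
    (hPe : ∅ ∈ P) (hPi : ∀ A ∈ P, ∀ B ∈ P, A ∩ B ∈ P)
    (hPu : ∀ A ∈ P, ∀ B ∈ P, A ∪ B ∈ P)
    {LU : List (Set X)} (hUo : ∀ U ∈ LU, IsOpen U)
    (hUl : ∀ A ∈ LU, ∀ B ∈ LU, (A ∩ B).Nonempty) :
    ∃ LV : List (Set X), LV.length = LU.length ∧ (∀ A ∈ LV, A ∈ P) ∧
      (∀ A ∈ LV, ∀ B ∈ LV, (A ∩ B).Nonempty) ∧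
      ∀ (i : ℕ) (hu : i < LU.length) (hv : i < LV.length), WitFor P LV[i] LU[i] := by
  classical
  set m := LU.length with hm
  set Uf : Fin m → Set X := fun i => LU.get i with hUf
  have hgetmem : ∀ i : Fin m, Uf i ∈ LU := fun i => List.get_mem LU i
  have hUfo : ∀ i, IsOpen (Uf i) := fun i => hUo _ (hgetmem i)
  have hUfl : ∀ i j, (Uf i ∩ Uf j).Nonempty := fun i j =>
    hUl _ (hgetmem i) _ (hgetmem j)
  have hAex : ∀ i j : Fin m, ∃ V, V ∈ P ∧ V.Nonempty ∧ WitFor P V (Uf i ∩ Uf j) :=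
    fun i j => skeletal_witness hX hσo hσn hσw hPo hPσ
      ((hUfo i).inter (hUfo j)) (hUfl i j)
  choose A hAP hAn hAw using hAex
  set V : Fin m → Set X := fun i => unionList (List.ofFn fun j => A i j ∪ A j i) with hV
  have hentry : ∀ i : Fin m, ∀ E ∈ (List.ofFn fun j => A i j ∪ A j i), ∃ j, E = A i j ∪ A j i := by
    intro i E hE
    obtain ⟨j, hj⟩ := List.mem_ofFn.mp hE
    exact ⟨j, hj.symm⟩
  have hVP : ∀ i, V i ∈ P := by
    intro i
    refine unionList_mem hPe hPu ?_
    intro E hE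
    obtain ⟨j, rfl⟩ := hentry i E hE
    exact hPu _ (hAP i j) _ (hAP j i)
  have hsubV : ∀ i j, A i j ⊆ V i ∧ A i j ⊆ V j := by
    intro i j
    constructor
    · exact subset_union_left.trans (subset_unionList (by
        refine List.mem_ofFn.mpr ⟨j, rfl⟩))
    · exact subset_union_right.trans (subset_unionList (by
        refine List.mem_ofFn.mpr ⟨i, rfl⟩))
  have hVl : ∀ i j, (V i ∩ V j).Nonempty := by
    intro i j
    exact (hAn i j).mono (subset_inter (hsubV i j).1 (hsubV i j).2)
  have hVw : ∀ i, WitFor P (V i) (Uf i) := by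
    intro i
    refine witFor_unionList hPi ?_
    intro E hE
    obtain ⟨j, rfl⟩ := hentry i E hE
    refine ⟨hPu _ (hAP i j) _ (hAP j i), ?_⟩
    intro W hW hWn hWs
    by_cases hWa : (W ∩ A i j).Nonempty
    · have hWaP : W ∩ A i j ∈ P := hPi W hW _ (hAP i j)
      have := hAw i j _ hWaP hWa inter_subset_right
      exact (this.mono (inter_subset_inter (inter_subset_left)
        inter_subset_left))
    · have hWt : W ⊆ A j i := by
        intro x hx
        rcases hWs hx with hxa | hxt
        · exact absurd ⟨x, hx, hxa⟩ hWa
        · exact hxt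
      have := hAw j i W hW hWn hWt
      exact this.mono (inter_subset_inter_right _ inter_subset_right)
  refine ⟨List.ofFn V, by simp [hm], ?_, ?_, ?_⟩
  · intro B hB
    obtain ⟨i, hi⟩ := List.mem_ofFn.mp hB
    exact hi ▸ hVP i
  · intro B hB C hC
    obtain ⟨i, hi⟩ := List.mem_ofFn.mp hB
    obtain ⟨j, hj⟩ := List.mem_ofFn.mp hC
    exact hi ▸ hj ▸ hVl i j
  · intro i hu hv
    have h1 : (List.ofFn V)[i] = V ⟨i, by simpa using hu⟩ := by
      simp [List.getElem_ofFn]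
    have h2 : LU[i] = Uf ⟨i, hu⟩ := rfl
    rw [h1, h2]
    exact hVw _

/-- All lists over `p` of length at most `n`. -/
def allLe {α : Type*} (p : List α) : ℕ → List (List α)
  | 0 => [[]]
  | n + 1 => [] :: (allLe p n).flatMap (fun l => p.map (· :: l))

theorem mem_allLe {α : Type*} {p : List α} :
    ∀ {n : ℕ} {l : List α}, (∀ a ∈ l, a ∈ p) → l.length ≤ n → l ∈ allLe p n := by
  intro n
  induction n with
  | zero =>
    intro l h hl
    have : l = [] := List.eq_nil_of_length_eq_zero (Nat.le_zero.mp hl)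
    subst this
    simp [allLe]
  | succ n ih =>
    intro l h hl
    cases l with
    | nil => simp [allLe]
    | cons a t =>
      have ht : t ∈ allLe p n := ih (fun b hb => h b (by simp [hb])) (by simpa using hl)
      simp only [allLe, List.mem_cons]
      refine Or.inr (List.mem_flatMap.mpr ⟨t, ht, ?_⟩)
      exact List.mem_map.mpr ⟨a, h a (by simp), rfl⟩

end IFavAux
end PartB
section PartC
namespace IFavAux
open Set
variable {X : Type u} [TopologicalSpace X] [T1Space X]

/-- Game state for simulating the superextension game inside `X`. -/
structure StC (X : Type u) [TopologicalSpace X] where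
  hist : List (Set (MaxLinked X))
  fam : List (Set X)
  rem : List (Set X)
  acc : Set X

variable (Sg : List (Set (MaxLinked X)) → Set (MaxLinked X))

noncomputable def st0C : StC X :=
  ⟨[], extract (Sg []), extract (Sg []), ∅⟩

noncomputable def updC (s : StC X) (b : Set X) : StC X :=
  if s.rem.length ≤ 1 then
    let h' := s.hist ++ [IP ((s.acc ∪ b) :: s.fam.tail)]
    ⟨h', extract (Sg h'), extract (Sg h'), ∅⟩
  else ⟨s.hist, s.fam, s.rem.tail, s.acc ∪ b⟩

noncomputable def procRC : List (Set X) → StC X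
  | [] => st0C Sg
  | b :: r => updC Sg (procRC r) b

noncomputable def procC (l : List (Set X)) : StC X := procRC Sg l.reverse

noncomputable def sigC (l : List (Set X)) : Set X := ((procC Sg l).rem).headD Set.univ

/-- state invariant, unconditional -/
def InvC (s : StC X) : Prop :=
  s.rem ≠ [] ∧ (∀ A ∈ s.rem, A ∈ s.fam) ∧ s.fam = extract (Sg s.hist)

theorem invC_procRC : ∀ l : List (Set X), InvC Sg (procRC Sg l) := by
  intro l
  induction l with
  | nil =>
    exact ⟨extract_ne_nil _, fun A hA => hA, rfl⟩
  | cons b r ih =>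
    show InvC Sg (updC Sg (procRC Sg r) b)
    obtain ⟨h1, h2, h3⟩ := ih
    unfold updC
    split
    · exact ⟨extract_ne_nil _, fun A hA => hA, rfl⟩
    · next hlen =>
      refine ⟨?_, fun A hA => h2 A (List.mem_of_mem_tail hA), h3⟩
      have : 1 < (procRC Sg r).rem.length := by omega
      have : (procRC Sg r).rem.tail.length > 0 := by
        rw [List.length_tail]; omega
      exact List.ne_nil_of_length_pos this

theorem sigC_spec (hX : Nonempty X) (hSo : ∀ h, IsOpen (Sg h))
    (hSn : ∀ h, Nonempty (MaxLinked X) → (Sg h).Nonempty) (l : List (Set X)) :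
    IsOpen (sigC Sg l) ∧ (sigC Sg l).Nonempty := by
  have hLam : Nonempty (MaxLinked X) := ⟨pointMLS hX.some⟩
  obtain ⟨h1, h2, h3⟩ := invC_procRC Sg l.reverse
  obtain ⟨ho, ⟨ξ, hξ⟩, hsub⟩ := extract_spec hX (hSo (procRC Sg l.reverse).hist)
    (hSn _ hLam)
  have hmem : sigC Sg l ∈ (procRC Sg l.reverse).fam := by
    unfold sigC procC
    cases hrem : (procRC Sg l.reverse).rem with
    | nil => exact absurd hrem h1
    | cons a t =>
      simp only [hrem, List.headD_cons]
      exact h2 a (by rw [hrem]; simp)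
  rw [h3] at hmem
  constructor
  · exact ho _ hmem
  · obtain ⟨F, hF, hFs⟩ := hξ _ hmem
    exact (ξ.nonempty' F hF).mono hFs

theorem ifav_of_superext (hX : Nonempty X) (h : IFavorable (MaxLinked X)) :
    IFavorable X := by
  classical
  obtain ⟨Sg, hSo, hSn, hSw⟩ := h
  have hLam : Nonempty (MaxLinked X) := ⟨pointMLS hX.some⟩
  refine ⟨sigC Sg, fun l => (sigC_spec Sg hX hSo hSn l).1,
    fun l _ => (sigC_spec Sg hX hSo hSn l).2, ?_⟩
  intro B hBo hBn hB0 hBs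
  set sk : ℕ → StC X := fun k => procC Sg (List.ofFn fun i : Fin k => B i) with hsk
  have hstep : ∀ k, sk (k + 1) = updC Sg (sk k) (B k) := by
    intro k
    have harg : (List.ofFn fun i : Fin k => B (i.castSucc)) =
        (List.ofFn fun i : Fin k => B i) := by
      simp
    show procC Sg _ = _
    rw [List.ofFn_succ' (fun i : Fin (k + 1) => B i), List.concat_eq_append]
    unfold procC
    rw [List.reverse_append]
    simp only [List.reverse_cons, List.reverse_nil, List.nil_append, List.singleton_append]
    show updC Sg (procRC Sg (List.ofFn fun i : Fin k => B (i.castSucc)).reverse) _ = _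
    rw [harg]
    rfl
  have hIC : ∀ k, InvC Sg (sk k) := fun k => invC_procRC Sg _
  have hBk : ∀ k, B k ⊆ (sk k).rem.headD Set.univ := by
    intro k
    cases k with
    | zero =>
      have h0 : (List.ofFn fun i : Fin 0 => B i) = ([] : List (Set X)) := by simp
      have : sk 0 = procC Sg [] := by rw [hsk]; simp only [h0]
      rw [this]
      exact hB0
    | succ n => exact hBs n
  -- intra-stage run
  have hrun : ∀ k j, j < (sk k).rem.length →
      (sk (k + j)).hist = (sk k).hist ∧ (sk (k + j)).fam = (sk k).fam ∧
      (sk (k + j)).rem = (sk k).rem.drop j ∧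
      (sk (k + j)).acc = (sk k).acc ∪ ⋃ i ∈ Finset.range j, B (k + i) := by
    intro k j
    induction j with
    | zero =>
      intro _
      refine ⟨rfl, rfl, by simp, by simp⟩
    | succ n ih =>
      intro hn
      obtain ⟨ih1, ih2, ih3, ih4⟩ := ih (by omega)
      have hlen : ¬ (sk (k + n)).rem.length ≤ 1 := by
        rw [ih3, List.length_drop]; omega
      have : sk (k + (n + 1)) = updC Sg (sk (k + n)) (B (k + n)) := by
        rw [← hstep (k + n)]; ring_nf
      rw [this]
      unfold updC
      rw [if_neg hlen]
      refine ⟨ih1, ih2, ?_, ?_⟩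
      · rw [ih3, List.tail_drop]
      · rw [ih4]
        ext x
        simp only [Set.mem_union, Set.mem_iUnion, Finset.mem_range]
        constructor
        · rintro ((h | ⟨i, hi, h⟩) | h)
          · exact Or.inl h
          · exact Or.inr ⟨i, by omega, h⟩
          · exact Or.inr ⟨n, by omega, h⟩
        · rintro (h | ⟨i, hi, h⟩)
          · exact Or.inl (Or.inl h)
          · rcases Nat.lt_succ_iff_lt_or_eq.mp hi with hi' | rfl
            · exact Or.inl (Or.inr ⟨i, hi', h⟩)
            · exact Or.inr h
  -- responses land in the members of fam
  have hresp : ∀ k j (hj : j < (sk k).rem.length), B (k + j) ⊆ (sk k).rem[j] := by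
    intro k j hj
    have h1 := hBk (k + j)
    obtain ⟨_, _, h3, _⟩ := hrun k j hj
    rw [h3] at h1
    rwa [List.drop_eq_getElem_cons hj, List.headD_cons] at h1
  -- stage end
  have hend : ∀ k,
      sk (k + (sk k).rem.length) =
        ⟨(sk k).hist ++ [IP (((sk k).acc ∪
            ⋃ i ∈ Finset.range (sk k).rem.length, B (k + i)) :: (sk k).fam.tail)],
          extract (Sg ((sk k).hist ++ [IP (((sk k).acc ∪
            ⋃ i ∈ Finset.range (sk k).rem.length, B (k + i)) :: (sk k).fam.tail)])),
          extract (Sg ((sk k).hist ++ [IP (((sk k).acc ∪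
            ⋃ i ∈ Finset.range (sk k).rem.length, B (k + i)) :: (sk k).fam.tail)])), ∅⟩ := by
    intro k
    have hlen : (sk k).rem.length ≠ 0 := by
      intro h0
      exact (hIC k).1 (List.eq_nil_of_length_eq_zero h0)
    obtain ⟨n', hn'⟩ : ∃ n', (sk k).rem.length = n' + 1 :=
      ⟨(sk k).rem.length - 1, by omega⟩
    obtain ⟨ih1, ih2, ih3, ih4⟩ := hrun k n' (by omega)
    have hstep' : sk (k + (sk k).rem.length) = updC Sg (sk (k + n')) (B (k + n')) := by
      rw [hn', ← hstep (k + n')]; ring_nf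
    have hlen1 : (sk (k + n')).rem.length ≤ 1 := by
      rw [ih3, List.length_drop]; omega
    rw [hstep']
    unfold updC
    rw [if_pos hlen1]
    simp only [ih1, ih2, ih4]
    have hacc : ((sk k).acc ∪ ⋃ i ∈ Finset.range n', B (k + i)) ∪ B (k + n') =
        (sk k).acc ∪ ⋃ i ∈ Finset.range (sk k).rem.length, B (k + i) := by
      rw [hn']
      ext x
      simp only [Set.mem_union, Set.mem_iUnion, Finset.mem_range]
      constructor
      · rintro ((h | ⟨i, hi, h⟩) | h)
        · exact Or.inl h
        · exact Or.inr ⟨i, by omega, h⟩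
        · exact Or.inr ⟨n', by omega, h⟩
      · rintro (h | ⟨i, hi, h⟩)
        · exact Or.inl (Or.inl h)
        · rcases Nat.lt_succ_iff_lt_or_eq.mp hi with hi' | rfl
          · exact Or.inl (Or.inr ⟨i, hi', h⟩)
          · exact Or.inr h
    rw [hacc]
  -- stage start times
  obtain ⟨tms, htms0, htmsS⟩ : ∃ t : ℕ → ℕ, t 0 = 0 ∧
      ∀ n, t (n + 1) = t n + (sk (t n)).rem.length :=
    ⟨fun n => Nat.rec 0 (fun _ a => a + (sk a).rem.length) n, rfl, fun _ => rfl⟩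
  -- the λ-moves
  set Mt : ℕ → Set (MaxLinked X) := fun t =>
    IP ((⋃ i ∈ Finset.range (sk (tms t)).rem.length, B (tms t + i)) :: (sk (tms t)).fam.tail)
    with hMt
  have hfresh : ∀ t, (sk (tms t)).acc = ∅ ∧ (sk (tms t)).rem = (sk (tms t)).fam ∧
      (sk (tms t)).hist = List.ofFn (fun i : Fin t => Mt i) := by
    intro t
    induction t with
    | zero =>
      have h0 : sk (tms 0) = st0C Sg := by
        rw [htms0, hsk]
        show procC Sg _ = _
        have h0 : (List.ofFn fun i : Fin 0 => B i) = ([] : List (Set X)) := by simp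
        rw [h0]
        rfl
      rw [h0]
      exact ⟨rfl, rfl, by simp [st0C]⟩
    | succ t iht =>
      obtain ⟨ia, ir, ih⟩ := iht
      have he := hend (tms t)
      rw [← htmsS t] at he
      rw [he]
      refine ⟨rfl, rfl, ?_⟩
      show (sk (tms t)).hist ++ [IP (((sk (tms t)).acc ∪
          ⋃ i ∈ Finset.range (sk (tms t)).rem.length, B (tms t + i)) ::
          (sk (tms t)).fam.tail)] = _
      have harg : (List.ofFn fun i : Fin t => Mt (i.castSucc)) =
          (List.ofFn fun i : Fin t => Mt i) := by
        simp
      rw [ia, Set.empty_union, ih, List.ofFn_succ' (fun i : Fin (t + 1) => Mt i),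
        List.concat_eq_append, harg]
      congr 1
  -- M is a valid play for Sg
  have hMsub : ∀ t, Mt t ⊆ Sg (List.ofFn fun i : Fin t => Mt i) := by
    intro t
    obtain ⟨ia, ir, ih⟩ := hfresh t
    obtain ⟨ho, ⟨ξ, hξ⟩, hsub⟩ := extract_spec hX (hSo (sk (tms t)).hist) (hSn _ hLam)
    have hfam : (sk (tms t)).fam = extract (Sg (sk (tms t)).hist) := (hIC (tms t)).2.2
    obtain ⟨tl, htl⟩ := extract_eq_cons (Sg (sk (tms t)).hist)
    intro η hη
    have hηfam : η ∈ IP (sk (tms t)).fam := by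
      rw [hfam, htl]
      intro U hU
      rcases List.mem_cons.mp hU with rfl | hU
      · exact mem_plus_univ hX η
      · have : U ∈ ((sk (tms t)).fam).tail := by rw [hfam, htl]; exact hU
        exact hη U (List.mem_cons_of_mem _ this)
    rw [← ih]
    rw [hfam] at hηfam
    exact hsub hηfam
  have hMopen : ∀ t, IsOpen (Mt t) := by
    intro t
    refine isOpen_IP ?_
    intro U hU
    rcases List.mem_cons.mp hU with rfl | hU
    · exact isOpen_biUnion fun i _ => hBo _
    · obtain ⟨ho, _, _⟩ := extract_spec hX (hSo (sk (tms t)).hist) (hSn _ hLam)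
      exact ho U (by
        rw [(hIC (tms t)).2.2] at hU
        exact List.mem_of_mem_tail hU)
  have hlenpos : ∀ t, 0 < (sk (tms t)).rem.length :=
    fun t => List.length_pos_iff.mpr (hIC (tms t)).1
  have hMne : ∀ t, (Mt t).Nonempty := by
    intro t
    obtain ⟨ia, ir, ih⟩ := hfresh t
    obtain ⟨ho, ⟨ξ, hξ⟩, hsub⟩ := extract_spec hX (hSo (sk (tms t)).hist) (hSn _ hLam)
    have hfam : (sk (tms t)).fam = extract (Sg (sk (tms t)).hist) := (hIC (tms t)).2.2
    -- linkedness of the list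
    have hlink : ∀ A ∈ ((⋃ i ∈ Finset.range (sk (tms t)).rem.length, B (tms t + i)) ::
        (sk (tms t)).fam.tail), ∀ C ∈ ((⋃ i ∈ Finset.range (sk (tms t)).rem.length,
          B (tms t + i)) :: (sk (tms t)).fam.tail), (A ∩ C).Nonempty := by
      have hmemtail : ∀ A ∈ (sk (tms t)).fam.tail,
          ∃ j, j + 1 < (sk (tms t)).rem.length ∧ B (tms t + (j + 1)) ⊆ A := by
        intro A hA
        rw [← ir] at hA
        obtain ⟨i, hi, hiA⟩ := List.mem_iff_getElem.mp hA
        have hlt : ((sk (tms t)).rem.tail).length = (sk (tms t)).rem.length - 1 := List.length_tail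
        refine ⟨i, by omega, ?_⟩
        have hresp' := hresp (tms t) (i + 1) (by omega)
        rw [← hiA, List.getElem_tail]
        exact hresp'
      have hBsubU : ∀ j, j < (sk (tms t)).rem.length → B (tms t + j) ⊆
          ⋃ i ∈ Finset.range (sk (tms t)).rem.length, B (tms t + i) := by
        intro j hj x hx
        exact Set.mem_biUnion (Finset.mem_range.mpr hj) hx
      intro A hA C hC
      rcases List.mem_cons.mp hA with rfl | hA <;> rcases List.mem_cons.mp hC with rfl | hC
      · exact ((hBn (tms t)).mono (by
          simpa using hBsubU 0 (hlenpos t))).mono (Set.subset_inter Set.Subset.rfl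
            Set.Subset.rfl)
      · obtain ⟨j, hj, hjC⟩ := hmemtail C hC
        exact ((hBn (tms t + (j + 1))).mono
          (Set.subset_inter (hBsubU (j + 1) hj) hjC))
      · obtain ⟨j, hj, hjA⟩ := hmemtail A hA
        exact ((hBn (tms t + (j + 1))).mono
          (Set.subset_inter hjA (hBsubU (j + 1) hj)))
      · refine linked_of_mem_IP hξ A ?_ C ?_
        · rw [hfam] at hA
          exact List.mem_of_mem_tail hA
        · rw [hfam] at hC
          exact List.mem_of_mem_tail hC
    obtain ⟨η, hη⟩ := exists_mem_IP hlink
    exact ⟨η, hη⟩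
  have hdense := hSw Mt hMopen hMne
    (by
      have := hMsub 0
      simpa using this)
    (fun t => hMsub (t + 1))
  -- conclude density in X
  rw [dense_iff_inter_open]
  intro U hU hUn
  have h1 : IsOpen (MaxLinked.plus U) := isOpen_plus hU
  have h2 : (MaxLinked.plus U).Nonempty :=
    ⟨pointMLS hUn.choose, pointMLS_mem_plus hUn.choose_spec⟩
  obtain ⟨η, hη1, hη2⟩ := hdense.inter_open_nonempty _ h1 h2
  obtain ⟨t, hηt⟩ := Set.mem_iUnion.mp hη2
  have hb : η ∈ MaxLinked.plus (⋃ i ∈ Finset.range (sk (tms t)).rem.length,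
      B (tms t + i)) := hηt _ (by simp)
  obtain ⟨F, hF, hFs⟩ := hb
  obtain ⟨G, hG, hGs⟩ := hη1
  obtain ⟨x, hx1, hx2⟩ := η.linked' F hF G hG
  have hxB := hFs hx1
  simp only [Set.mem_iUnion, Finset.mem_range] at hxB
  obtain ⟨i, hi, hxBi⟩ := hxB
  exact ⟨x, hGs hx2, Set.mem_iUnion.mpr ⟨tms t + i, hxBi⟩⟩

end IFavAux
end PartC
section PartD
namespace IFavAux
open Set
variable {X : Type u} [TopologicalSpace X] [T1Space X]

def goodFam (l : List (Set X)) : Prop :=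
  l ≠ [] ∧ (∀ A ∈ l, IsOpen A) ∧ ∀ A ∈ l, ∀ C ∈ l, (A ∩ C).Nonempty

structure StD (X : Type u) [TopologicalSpace X] where
  pool : List (Set X)
  queue : List (List (Set X))

variable (σ : List (Set X) → Set X)

noncomputable def extendPool (s : StD X) (S : Set (MaxLinked X)) : List (Set X) :=
  s.pool ++ extract S ++ ((allLe s.pool s.pool.length).map σ)
    ++ (s.pool.flatMap fun A => s.pool.map fun C => A ∩ C)
    ++ (s.pool.flatMap fun A => s.pool.map fun C => A ∪ C)

noncomputable def updD (s : StD X) (S : Set (MaxLinked X)) : StD X :=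
  ⟨extendPool σ s S, s.queue.drop 1 ++
    ((allLe (extendPool σ s S) (extendPool σ s S).length).filter
      fun l => @decide (goodFam l) (Classical.propDecidable _))⟩

def st0D : StD X := ⟨[∅, Set.univ], []⟩

noncomputable def procRD : List (Set (MaxLinked X)) → StD X
  | [] => st0D
  | S :: r => updD σ (procRD r) S

noncomputable def procD (l : List (Set (MaxLinked X))) : StD X := procRD σ l.reverse

noncomputable def headQ (s : StD X) : List (Set X) := s.queue.headD [Set.univ]

noncomputable def sigD (l : List (Set (MaxLinked X))) : Set (MaxLinked X) :=
  IP (headQ (procD σ l))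

theorem queue_good : ∀ l : List (Set (MaxLinked X)), ∀ q ∈ (procRD σ l).queue, goodFam q := by
  intro l
  induction l with
  | nil => intro q hq; simp [procRD, st0D] at hq
  | cons S r ih =>
    intro q hq
    show goodFam q
    have hq' : q ∈ (updD σ (procRD σ r) S).queue := hq
    rcases List.mem_append.mp hq' with h | h
    · exact ih q (List.mem_of_mem_drop h)
    · have := (List.mem_filter.mp h).2
      exact @of_decide_eq_true _ (Classical.propDecidable _) this

theorem headQ_good (hX : Nonempty X) (l : List (Set (MaxLinked X))) :
    goodFam (headQ (procRD σ l)) := by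
  unfold headQ
  cases hq : (procRD σ l).queue with
  | nil =>
    refine ⟨by simp, by simp, ?_⟩
    intro A hA C hC
    rcases List.mem_singleton.mp hA with rfl
    rcases List.mem_singleton.mp hC with rfl
    simpa using (Set.univ_nonempty : (Set.univ : Set X).Nonempty)
  | cons q t =>
    simp only [List.headD_cons]
    exact queue_good σ l q (by rw [hq]; simp)

theorem sigD_spec (hX : Nonempty X) (l : List (Set (MaxLinked X))) :
    IsOpen (sigD σ l) ∧ (sigD σ l).Nonempty := by
  obtain ⟨h1, h2, h3⟩ := headQ_good σ hX l.reverse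
  constructor
  · exact isOpen_IP h2
  · exact exists_mem_IP h3

theorem superext_of_ifav (hX : Nonempty X) (h : IFavorable X) :
    IFavorable (MaxLinked X) := by
  classical
  obtain ⟨σ, hσo, hσn, hσw⟩ := h
  refine ⟨sigD σ, fun l => (sigD_spec σ hX l).1, fun l _ => (sigD_spec σ hX l).2, ?_⟩
  intro S hSop hSne hS0 hSs
  set sk : ℕ → StD X := fun t => procD σ (List.ofFn fun i : Fin t => S i) with hsk
  have hsk0 : sk 0 = st0D := by
    rw [hsk]
    show procD σ _ = _
    have h0 : (List.ofFn fun i : Fin 0 => S i) = ([] : List (Set (MaxLinked X))) := by simp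
    rw [h0]
    rfl
  have hstep : ∀ t, sk (t + 1) = updD σ (sk t) (S t) := by
    intro t
    have harg : (List.ofFn fun i : Fin t => S (i.castSucc)) =
        (List.ofFn fun i : Fin t => S i) := by simp
    show procD σ _ = _
    rw [List.ofFn_succ' (fun i : Fin (t + 1) => S i), List.concat_eq_append]
    unfold procD
    rw [List.reverse_append]
    simp only [List.reverse_cons, List.reverse_nil, List.nil_append, List.singleton_append]
    show updD σ (procRD σ (List.ofFn fun i : Fin t => S (i.castSucc)).reverse) _ = _
    rw [harg]
    rfl
  -- pool monotonicity
  have hpoolstep : ∀ t, ∀ A ∈ (sk t).pool, A ∈ (sk (t + 1)).pool := by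
    intro t A hA
    rw [hstep t]
    show A ∈ extendPool σ (sk t) (S t)
    unfold extendPool
    exact List.mem_append_left _ (List.mem_append_left _ (List.mem_append_left _
      (List.mem_append_left _ hA)))
  have hpoolmono : ∀ t t', t ≤ t' → ∀ A ∈ (sk t).pool, A ∈ (sk t').pool := by
    intro t t' htt'
    induction t', htt' using Nat.le_induction with
    | base => exact fun A hA => hA
    | succ n hn ih => exact fun A hA => hpoolstep n A (ih A hA)
  have hlenstep : ∀ t, (sk t).pool.length + 1 ≤ (sk (t + 1)).pool.length := by
    intro t
    rw [hstep t]
    show _ ≤ (extendPool σ (sk t) (S t)).length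
    unfold extendPool
    simp only [List.length_append]
    have := extract_ne_nil (S t)
    have : 0 < (extract (S t)).length := List.length_pos_iff.mpr this
    omega
  have hlenmono : ∀ t t', t ≤ t' → (sk t).pool.length ≤ (sk t').pool.length := by
    intro t t' htt'
    induction t', htt' using Nat.le_induction with
    | base => exact le_rfl
    | succ n hn ih => exact ih.trans (by have := hlenstep n; omega)
  have hlenbig : ∀ n, ∃ t, n ≤ (sk t).pool.length := by
    intro n
    induction n with
    | zero => exact ⟨0, Nat.zero_le _⟩
    | succ n ih =>
      obtain ⟨t, ht⟩ := ih
      exact ⟨t + 1, by have := hlenstep t; omega⟩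
  set P : Set (Set X) := {A | ∃ t, A ∈ (sk t).pool} with hP
  have hPfin : ∀ L : List (Set X), (∀ A ∈ L, A ∈ P) →
      ∃ t, (∀ A ∈ L, A ∈ (sk t).pool) ∧ L.length ≤ (sk t).pool.length := by
    intro L hL
    have hex : ∃ t, ∀ A ∈ L, A ∈ (sk t).pool := by
      induction L with
      | nil => exact ⟨0, by simp⟩
      | cons a l ih =>
        obtain ⟨t1, ht1⟩ := ih (fun A hA => hL A (by simp [hA]))
        obtain ⟨t2, ht2⟩ := hL a (by simp)
        refine ⟨max t1 t2, ?_⟩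
        intro A hA
        rcases List.mem_cons.mp hA with rfl | hA
        · exact hpoolmono t2 _ (le_max_right _ _) A ht2
        · exact hpoolmono t1 _ (le_max_left _ _) A (ht1 A hA)
    obtain ⟨t1, ht1⟩ := hex
    obtain ⟨t2, ht2⟩ := hlenbig L.length
    refine ⟨max t1 t2, fun A hA => hpoolmono t1 _ (le_max_left _ _) A (ht1 A hA),
      ht2.trans (hlenmono t2 _ (le_max_right _ _))⟩
  -- closure properties of P
  have hPσ : ∀ l : List (Set X), (∀ A ∈ l, A ∈ P) → σ l ∈ P := by
    intro l hl
    obtain ⟨t, htm, htl⟩ := hPfin l hl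
    refine ⟨t + 1, ?_⟩
    rw [hstep t]
    show σ l ∈ extendPool σ (sk t) (S t)
    unfold extendPool
    refine List.mem_append_left _ (List.mem_append_left _ (List.mem_append_right _ ?_))
    exact List.mem_map.mpr ⟨l, mem_allLe htm htl, rfl⟩
  have hPi : ∀ A ∈ P, ∀ C ∈ P, A ∩ C ∈ P := by
    intro A hA C hC
    obtain ⟨t, htm, _⟩ := hPfin [A, C] (by
      intro E hE
      rcases List.mem_cons.mp hE with rfl | hE
      · exact hA
      · rcases List.mem_singleton.mp hE with rfl; exact hC)
    refine ⟨t + 1, ?_⟩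
    rw [hstep t]
    show A ∩ C ∈ extendPool σ (sk t) (S t)
    unfold extendPool
    refine List.mem_append_left _ (List.mem_append_right _ ?_)
    refine List.mem_flatMap.mpr ⟨A, htm A (by simp), ?_⟩
    exact List.mem_map.mpr ⟨C, htm C (by simp), rfl⟩
  have hPu : ∀ A ∈ P, ∀ C ∈ P, A ∪ C ∈ P := by
    intro A hA C hC
    obtain ⟨t, htm, _⟩ := hPfin [A, C] (by
      intro E hE
      rcases List.mem_cons.mp hE with rfl | hE
      · exact hA
      · rcases List.mem_singleton.mp hE with rfl; exact hC)
    refine ⟨t + 1, ?_⟩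
    rw [hstep t]
    show A ∪ C ∈ extendPool σ (sk t) (S t)
    unfold extendPool
    refine List.mem_append_right _ ?_
    refine List.mem_flatMap.mpr ⟨A, htm A (by simp), ?_⟩
    exact List.mem_map.mpr ⟨C, htm C (by simp), rfl⟩
  have hPe : ∅ ∈ P := ⟨0, by rw [hsk0]; simp [st0D]⟩
  have hPo : ∀ A ∈ P, IsOpen A := by
    have hstageopen : ∀ t, ∀ A ∈ (sk t).pool, IsOpen A := by
      intro t
      induction t with
      | zero =>
        rw [hsk0]
        intro A hA
        simp only [st0D] at hA
        rcases List.mem_cons.mp hA with rfl | hA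
        · exact isOpen_empty
        · rcases List.mem_singleton.mp hA with rfl; exact isOpen_univ
      | succ n ih =>
        intro A hA
        rw [hstep n] at hA
        have hA' : A ∈ extendPool σ (sk n) (S n) := hA
        unfold extendPool at hA'
        rcases List.mem_append.mp hA' with hA' | hA'
        · rcases List.mem_append.mp hA' with hA' | hA'
          · rcases List.mem_append.mp hA' with hA' | hA'
            · rcases List.mem_append.mp hA' with hA' | hA'
              · exact ih A hA'
              · exact (extract_spec hX (hSop n) (hSne n)).1 A hA'
            · obtain ⟨l, _, rfl⟩ := List.mem_map.mp hA'
              exact hσo l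
          · obtain ⟨E, hE, hA'⟩ := List.mem_flatMap.mp hA'
            obtain ⟨C, hC, rfl⟩ := List.mem_map.mp hA'
            exact (ih E hE).inter (ih C hC)
        · obtain ⟨E, hE, hA'⟩ := List.mem_flatMap.mp hA'
          obtain ⟨C, hC, rfl⟩ := List.mem_map.mp hA'
          exact (ih E hE).union (ih C hC)
    rintro A ⟨t, ht⟩
    exact hstageopen t A ht
  -- the strategy's moves along this play
  have hSsub : ∀ t, S t ⊆ IP (headQ (sk t)) := by
    intro t
    cases t with
    | zero =>
      have h0 : (List.ofFn fun i : Fin 0 => S i) = ([] : List (Set (MaxLinked X))) := by simp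
      have : sigD σ [] = IP (headQ (sk 0)) := by
        rw [hsk]
        show sigD σ [] = IP (headQ (procD σ _))
        rw [h0]
        rfl
      rw [← this]
      exact hS0
    | succ n => exact hSs n
  -- fairness of the queue
  have hfair : ∀ i t L, (sk t).queue[i]? = some L → headQ (sk (t + i)) = L := by
    intro i
    induction i with
    | zero =>
      intro t L hL
      show headQ (sk t) = L
      unfold headQ
      cases hq : (sk t).queue with
      | nil => rw [hq] at hL; simp at hL
      | cons a q =>
        rw [hq] at hL
        simp only [List.getElem?_cons_zero, Option.some.injEq] at hL
        rw [hL]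
        simp
    | succ i ih =>
      intro t L hL
      obtain ⟨hi, _⟩ := List.getElem?_eq_some_iff.mp hL
      have hq1 : (sk (t + 1)).queue = (sk t).queue.drop 1 ++
          ((allLe (extendPool σ (sk t) (S t)) (extendPool σ (sk t) (S t)).length).filter
            fun l => @decide (goodFam l) (Classical.propDecidable _)) := by
        rw [hstep t]
        rfl
      have hlt2 : i < ((sk t).queue.drop 1).length := by
        rw [List.length_drop]; omega
      have hnew : (sk (t + 1)).queue[i]? = some L := by
        rw [hq1, List.getElem?_append_left hlt2, List.getElem?_drop]
        rw [show 1 + i = i + 1 by omega]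
        exact hL
      have hidx : t + (i + 1) = (t + 1) + i := by omega
      rw [hidx]
      exact ih (t + 1) L hnew
  -- enqueueing
  have henq : ∀ t L, goodFam L → (∀ A ∈ L, A ∈ (sk (t + 1)).pool) →
      L.length ≤ (sk (t + 1)).pool.length → L ∈ (sk (t + 1)).queue := by
    intro t L hg hmem hlenL
    have hpool : (sk (t + 1)).pool = extendPool σ (sk t) (S t) := by
      rw [hstep t]
      rfl
    have hq1 : (sk (t + 1)).queue = (sk t).queue.drop 1 ++
        ((allLe (extendPool σ (sk t) (S t)) (extendPool σ (sk t) (S t)).length).filter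
          fun l => @decide (goodFam l) (Classical.propDecidable _)) := by
      rw [hstep t]
      rfl
    rw [hq1]
    refine List.mem_append_right _ (List.mem_filter.mpr ⟨?_, ?_⟩)
    · rw [hpool] at hmem hlenL
      exact mem_allLe hmem hlenL
    · exact decide_eq_true hg
  -- density
  rw [dense_iff_inter_open]
  intro O hO hOn
  obtain ⟨hLUo, ⟨ξ0, hξ0⟩, hLUsub⟩ := extract_spec hX hO hOn
  have hLUl := linked_of_mem_IP hξ0
  obtain ⟨LV, hlenV, hLVP, hLVl, hLVw⟩ :=
    linked_witness hX hσo hσn hσw hPo hPσ hPe hPi hPu hLUo hLUl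
  have hLVgood : goodFam LV := by
    refine ⟨?_, fun A hA => hPo A (hLVP A hA), hLVl⟩
    intro hnil
    have := extract_ne_nil O
    rw [hnil] at hlenV
    simp at hlenV
    exact this (List.eq_nil_of_length_eq_zero hlenV.symm)
  obtain ⟨t0, ht0m, ht0l⟩ := hPfin LV hLVP
  have hLVq : LV ∈ (sk (t0 + 1)).queue :=
    henq t0 LV hLVgood (fun A hA => hpoolmono t0 (t0 + 1) (by omega) A (ht0m A hA))
      (ht0l.trans (hlenmono t0 (t0 + 1) (by omega)))
  obtain ⟨i, hiq⟩ := List.mem_iff_getElem?.mp hLVq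
  set t2 := (t0 + 1) + i with ht2
  have hplayed : headQ (sk t2) = LV := hfair i (t0 + 1) LV hiq
  have hSt2 : S t2 ⊆ IP LV := by
    rw [← hplayed]
    exact hSsub t2
  obtain ⟨hLWo, ⟨ξw, hξw⟩, hLWsub⟩ := extract_spec hX (hSop t2) (hSne t2)
  have hLWl := linked_of_mem_IP hξw
  have hLWP : ∀ A ∈ extract (S t2), A ∈ P := by
    intro A hA
    refine ⟨t2 + 1, ?_⟩
    rw [hstep t2]
    show A ∈ extendPool σ (sk t2) (S t2)
    unfold extendPool
    exact List.mem_append_left _ (List.mem_append_left _ (List.mem_append_left _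
      (List.mem_append_right _ hA)))
  -- every member of LW meets every member of LU
  have hcross : ∀ C ∈ extract (S t2), ∀ j (hj : j < (extract O).length),
      (C ∩ (extract O)[j]).Nonempty := by
    intro C hC j hj
    have hjV : j < LV.length := by omega
    have hVP : LV[j] ∈ P := hLVP _ (LV.getElem_mem hjV)
    have hVopen : IsOpen LV[j] := hPo _ hVP
    have hIPsub : IP (extract (S t2)) ⊆ MaxLinked.plus LV[j] :=
      (hLWsub.trans hSt2).trans (IP_subset_plus (LV.getElem_mem hjV))
    obtain ⟨A, hALW, hAV⟩ :=
      exists_subset_of_IP_subset_plus (extract_ne_nil (S t2)) hLWl hVopen hIPsub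
    have hCA : (C ∩ A).Nonempty := hLWl C hC A hALW
    have hCV : (C ∩ LV[j]).Nonempty := hCA.mono (Set.inter_subset_inter_right _ hAV)
    have hCVP : C ∩ LV[j] ∈ P := hPi C (hLWP C hC) _ hVP
    have := hLVw j hj hjV (C ∩ LV[j]) hCVP hCV Set.inter_subset_right
    exact this.mono (Set.inter_subset_inter_left _ Set.inter_subset_left)
  have hcomb : ∀ A ∈ extract (S t2) ++ extract O, ∀ C ∈ extract (S t2) ++ extract O,
      (A ∩ C).Nonempty := by
    intro A hA C hC
    rcases List.mem_append.mp hA with hA | hA <;> rcases List.mem_append.mp hC with hC | hC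
    · exact hLWl A hA C hC
    · obtain ⟨j, hj, rfl⟩ := List.mem_iff_getElem.mp hC
      exact hcross A hA j hj
    · obtain ⟨j, hj, rfl⟩ := List.mem_iff_getElem.mp hA
      rw [Set.inter_comm]
      exact hcross C hC j hj
    · exact hLUl A hA C hC
  obtain ⟨η, hη⟩ := exists_mem_IP hcomb
  have hη1 : η ∈ IP (extract (S t2)) := fun A hA => hη A (List.mem_append_left _ hA)
  have hη2 : η ∈ IP (extract O) := fun A hA => hη A (List.mem_append_right _ hA)
  exact ⟨η, hLUsub hη2, Set.mem_iUnion.mpr ⟨t2, hLWsub hη1⟩⟩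

end IFavAux
end PartD

/-- A compact Hausdorff space `X` is I-favorable if and only if its
superextension `λX` is I-favorable. -/
theorem ifavorable_iff_superextension_ifavorable {X : Type u} [TopologicalSpace X]
    [CompactSpace X] [T2Space X] :
    IFavorable X ↔ IFavorable (MaxLinked X) := by
  by_cases hX : Nonempty X
  · exact ⟨IFavAux.superext_of_ifav hX, IFavAux.ifav_of_superext hX⟩
  · have hIX : IFavorable X := by
      refine ⟨fun _ => ∅, fun _ => isOpen_empty, fun _ h => absurd h hX, ?_⟩
      intro B hBo hBn hB0 hBs
      obtain ⟨x, _⟩ := hBn 0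
      exact absurd ⟨x⟩ hX
    have hsub : ∀ ξ η : MaxLinked X, ξ = η := by
      intro ξ η
      have h1 : ξ.sets = ∅ := by
        ext F
        simp only [Set.mem_empty_iff_false, iff_false]
        intro hF
        obtain ⟨x, _⟩ := ξ.nonempty' F hF
        exact absurd ⟨x⟩ hX
      have h2 : η.sets = ∅ := by
        ext F
        simp only [Set.mem_empty_iff_false, iff_false]
        intro hF
        obtain ⟨x, _⟩ := η.nonempty' F hF
        exact absurd ⟨x⟩ hX
      rcases ξ with ⟨s1, a1, b1, c1, d1⟩
      rcases η with ⟨s2, a2, b2, c2, d2⟩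
      simp only at h1 h2
      subst h1
      subst h2
      rfl
    have hIL : IFavorable (MaxLinked X) := by
      refine ⟨fun _ => Set.univ, fun _ => isOpen_univ,
        fun _ h => by haveI := h; exact Set.univ_nonempty, ?_⟩
      intro B hBo hBn hB0 hBs
      rw [dense_iff_inter_open]
      intro U hU hUn
      obtain ⟨ξ, hξ⟩ := hUn
      obtain ⟨η, hη⟩ := hBn 0
      exact ⟨ξ, hξ, Set.mem_iUnion.mpr ⟨0, hsub η ξ ▸ hη⟩⟩
    exact ⟨fun _ => hIL, fun _ => hIX⟩
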